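/- Size of iterates of a piecewise affine function grows linearly: if f ∈ PAF_d has rational coefficients, p regions, and size s(f), then for all t ∈ ℕ, s(f^[t]) ≤ (d+1)²·s(f)·p·t + (t−1)·⌈log₂(d+1)⌉, where all rationals may be taken with common denominator. -/

import Mathlib

/-- Bit-size of a rational: max of the bit-lengths of numerator and denominator. -/
def qsize (x : ℚ) : ℕ := max x.num.natAbs.size x.den.size

private lemma mul_lt_mul_nat {a b A B : ℕ} (ha : a < A) (hb : b < B) : a * b < A * B := by
  nlinarith

private lemma natAbs_sum_le {ι : Type*} (s : Finset ι) (f : ι → ℤ) :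
    (∑ i ∈ s, f i).natAbs ≤ ∑ i ∈ s, (f i).natAbs := by
  classical
  induction s using Finset.induction with
  | empty => simp
  | @insert a s h ih =>
    rw [Finset.sum_insert h, Finset.sum_insert h]
    exact le_trans (Int.natAbs_add_le _ _) (by omega)

/-- A rational matrix with entries of size ≤ sz can be written as an integer matrix
over a common denominator, with all quantities bounded by `2^((d+1)^2 * sz)`. -/
private lemma matrix_rep (d sz : ℕ) (X : Matrix (Fin (d+1)) (Fin (d+1)) ℚ)
    (hX : ∀ i j, qsize (X i j) ≤ sz) :
    ∃ (N : Matrix (Fin (d+1)) (Fin (d+1)) ℤ) (D : ℕ), 0 < D ∧ D < 2 ^ ((d+1)^2 * sz) ∧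
      (∀ i j, (N i j).natAbs < 2 ^ ((d+1)^2 * sz)) ∧
      (∀ i j, X i j = (N i j : ℚ) / (D : ℚ)) := by
  classical
  set k : ℕ := (d+1)^2 with hk
  have hden : ∀ i j, (X i j).den ≤ 2 ^ sz - 1 := by
    intro i j
    have h1 : (X i j).den.size ≤ sz := le_trans (le_max_right _ _) (hX i j)
    have := Nat.size_le.mp h1
    omega
  have hnum : ∀ i j, (X i j).num.natAbs ≤ 2 ^ sz - 1 := by
    intro i j
    have h1 : (X i j).num.natAbs.size ≤ sz := le_trans (le_max_left _ _) (hX i j)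
    have := Nat.size_le.mp h1
    omega
  set D : ℕ := ∏ q : Fin (d+1) × Fin (d+1), (X q.1 q.2).den with hD
  have hdvd : ∀ i j, (X i j).den ∣ D := fun i j =>
    Finset.dvd_prod_of_mem _ (Finset.mem_univ (i, j))
  have hDpos : 0 < D := Finset.prod_pos (fun q _ => (X q.1 q.2).pos)
  have hcard : (Finset.univ : Finset (Fin (d+1) × Fin (d+1))).card = k := by
    simp [hk, Finset.card_univ, sq]
  refine ⟨fun i j => (X i j).num * ((D / (X i j).den : ℕ) : ℤ), D, hDpos, ?_, ?_, ?_⟩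
  · calc D ≤ (2 ^ sz - 1) ^ k := by
          rw [← hcard]
          exact Finset.prod_le_pow_card _ _ _ (fun q _ => hden q.1 q.2)
      _ < (2 ^ sz) ^ k := Nat.pow_lt_pow_left (by have := Nat.one_le_two_pow (n := sz); omega)
          (by rw [hk]; positivity)
      _ = 2 ^ (k * sz) := by rw [← pow_mul, mul_comm sz k]
  · intro i j
    have hrest : D / (X i j).den ≤ (2 ^ sz - 1) ^ (k - 1) := by
      have hsplit : D = (X i j).den * ∏ q ∈ Finset.univ.erase (i, j), (X q.1 q.2).den := by
        rw [hD, ← Finset.mul_prod_erase _ _ (Finset.mem_univ (i, j))]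
      have : D / (X i j).den = ∏ q ∈ Finset.univ.erase (i, j), (X q.1 q.2).den := by
        rw [hsplit, Nat.mul_div_cancel_left _ (X i j).pos]
      rw [this]
      have hc : (Finset.univ.erase ((i, j) : Fin (d+1) × Fin (d+1))).card = k - 1 := by
        rw [Finset.card_erase_of_mem (Finset.mem_univ _), hcard]
      rw [← hc]
      exact Finset.prod_le_pow_card _ _ _ (fun q _ => hden q.1 q.2)
    have hk1 : 1 ≤ k := by rw [hk]; exact pow_pos (Nat.succ_pos d) 2
    obtain ⟨n, hn⟩ : ∃ n, k = n + 1 := ⟨k - 1, by omega⟩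
    have hn' : k - 1 = n := by omega
    calc ((X i j).num * ((D / (X i j).den : ℕ) : ℤ)).natAbs
        = (X i j).num.natAbs * (D / (X i j).den) := by
          rw [Int.natAbs_mul, Int.natAbs_natCast]
      _ ≤ (2 ^ sz - 1) * (2 ^ sz - 1) ^ (k - 1) := Nat.mul_le_mul (hnum i j) hrest
      _ = (2 ^ sz - 1) ^ k := by rw [hn', hn]; exact (pow_succ' _ n).symm
      _ < (2 ^ sz) ^ k := Nat.pow_lt_pow_left (by have := Nat.one_le_two_pow (n := sz); omega)
          (by omega)
      _ = 2 ^ (k * sz) := by rw [← pow_mul, mul_comm sz k]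
  · intro i j
    have hcancel : (D / (X i j).den) * (X i j).den = D := Nat.div_mul_cancel (hdvd i j)
    have hdQ : ((X i j).den : ℚ) ≠ 0 := Nat.cast_ne_zero.mpr (X i j).pos.ne'
    have hDQ : (D : ℚ) ≠ 0 := by exact_mod_cast hDpos.ne'
    have hx : X i j = ((X i j).num : ℚ) / ((X i j).den : ℚ) := (Rat.num_div_den _).symm
    have h2 : ((D / (X i j).den : ℕ) : ℚ) * ((X i j).den : ℚ) = (D : ℚ) := by exact_mod_cast hcancel
    rw [eq_div_iff hDQ, hx, div_mul_eq_mul_div, div_eq_iff hdQ, Int.cast_mul,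
      Int.cast_natCast, mul_assoc, h2]

/-- Representation of a product of a nonempty list of rational matrices. -/
private lemma prod_rep (d c : ℕ) (L : List (Matrix (Fin (d+1)) (Fin (d+1)) ℚ))
    (hne : L ≠ [])
    (hL : ∀ X ∈ L, ∃ (N : Matrix (Fin (d+1)) (Fin (d+1)) ℤ) (D : ℕ),
      0 < D ∧ D < 2 ^ c ∧ (∀ i j, (N i j).natAbs < 2 ^ c) ∧
      (∀ i j, X i j = (N i j : ℚ) / (D : ℚ))) :
    ∃ (A : Matrix (Fin (d+1)) (Fin (d+1)) ℤ) (DT : ℕ), 0 < DT ∧ DT < 2 ^ (c * L.length) ∧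
      (∀ i j, (A i j).natAbs < (d+1) ^ (L.length - 1) * 2 ^ (c * L.length)) ∧
      (∀ i j, L.prod i j = (A i j : ℚ) / (DT : ℚ)) := by
  classical
  induction L with
  | nil => exact absurd rfl hne
  | cons X L ih =>
    obtain ⟨N, D, hDpos, hDlt, hNlt, hXrep⟩ := hL X List.mem_cons_self
    rcases L with _ | ⟨Y, L'⟩
    · refine ⟨N, D, hDpos, by simpa using hDlt, by simpa using hNlt, ?_⟩
      simpa using hXrep
    · set L : List (Matrix (Fin (d+1)) (Fin (d+1)) ℚ) := Y :: L' with hLdef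
      obtain ⟨A, DT, hDTpos, hDTlt, hAlt, hPrep⟩ :=
        ih (by simp [hLdef]) (fun Z hZ => hL Z (List.mem_cons_of_mem _ hZ))
      set l : ℕ := L.length with hl
      have hl1 : 1 ≤ l := by simp [hl, hLdef]
      refine ⟨N * A, D * DT, Nat.mul_pos hDpos hDTpos, ?_, ?_, ?_⟩
      · calc D * DT < 2 ^ c * 2 ^ (c * l) := mul_lt_mul_nat hDlt hDTlt
          _ = 2 ^ (c * (X :: L).length) := by
            rw [← pow_add]; congr 1; simp [hl]; ring
      · intro i j
        have hterm : ∀ k : Fin (d+1), (N i k * A k j).natAbs ≤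
            2 ^ c * ((d+1) ^ (l - 1) * 2 ^ (c * l)) - 1 := by
          intro k
          have : (N i k * A k j).natAbs < 2 ^ c * ((d+1) ^ (l - 1) * 2 ^ (c * l)) := by
            rw [Int.natAbs_mul]
            exact mul_lt_mul_nat (hNlt i k) (hAlt k j)
          omega
        have hsum : ((N * A) i j).natAbs ≤
            (d+1) * (2 ^ c * ((d+1) ^ (l - 1) * 2 ^ (c * l)) - 1) := by
          rw [Matrix.mul_apply]
          calc (∑ k, N i k * A k j).natAbs ≤ ∑ k, (N i k * A k j).natAbs :=
              natAbs_sum_le _ _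
            _ ≤ ∑ _k : Fin (d+1), (2 ^ c * ((d+1) ^ (l - 1) * 2 ^ (c * l)) - 1) :=
              Finset.sum_le_sum (fun k _ => hterm k)
            _ = (d+1) * (2 ^ c * ((d+1) ^ (l - 1) * 2 ^ (c * l)) - 1) := by
              simp [Finset.sum_const, mul_comm]
        have hpos : 0 < 2 ^ c * ((d+1) ^ (l - 1) * 2 ^ (c * l)) := by positivity
        have hlt : ((N * A) i j).natAbs <
            (d+1) * (2 ^ c * ((d+1) ^ (l - 1) * 2 ^ (c * l))) := by
          have hd1 : 0 < d + 1 := Nat.succ_pos d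
          calc ((N * A) i j).natAbs
              ≤ (d+1) * (2 ^ c * ((d+1) ^ (l - 1) * 2 ^ (c * l)) - 1) := hsum
            _ < (d+1) * (2 ^ c * ((d+1) ^ (l - 1) * 2 ^ (c * l))) :=
              mul_lt_mul_of_pos_left (by omega) hd1
        calc ((N * A) i j).natAbs
            < (d+1) * (2 ^ c * ((d+1) ^ (l - 1) * 2 ^ (c * l))) := hlt
          _ = (d+1) ^ ((X :: L).length - 1) * 2 ^ (c * (X :: L).length) := by
            have h1 : (X :: L).length - 1 = l := by simp [hl]
            have h2 : (X :: L).length = l + 1 := by simp [hl]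
            rw [h1, h2]
            have h3 : (d+1) ^ l = (d+1) * (d+1) ^ (l - 1) := by
              conv_lhs => rw [show l = 1 + (l - 1) by omega]
              rw [pow_add, pow_one]
            rw [h3, mul_add, pow_add, mul_one]
            ring
      · intro i j
        have hentry : (X * L.prod) i j = ∑ k, X i k * L.prod k j := Matrix.mul_apply
        rw [List.prod_cons]
        show (X * L.prod) i j = _
        rw [hentry]
        have : ∀ k : Fin (d+1), X i k * L.prod k j =
            ((N i k * A k j : ℤ) : ℚ) / ((D * DT : ℕ) : ℚ) := by
          intro k
          rw [hXrep i k, hPrep k j, div_mul_div_comm]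
          push_cast
          ring
        rw [Finset.sum_congr rfl (fun k _ => this k), ← Finset.sum_div]
        congr 1
        rw [Matrix.mul_apply]
        push_cast
        ring

private lemma qsize_le_of_rep {x : ℚ} {a : ℤ} {D m : ℕ} (hDpos : 0 < D)
    (ha : a.natAbs < 2 ^ m) (hD : D < 2 ^ m) (hx : x = (a : ℚ) / (D : ℚ)) :
    qsize x ≤ m := by
  have hDne : (D : ℤ) ≠ 0 := by exact_mod_cast hDpos.ne'
  have hdiv : x = (a : ℚ) / ((D : ℤ) : ℚ) := by rw [hx]; push_cast; ring
  have hdivInt : x = Rat.divInt a (D : ℤ) := by rw [Rat.divInt_eq_div]; exact hdiv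
  have hnum : x.num ∣ a := hdivInt ▸ Rat.num_dvd a hDne
  have hden : (x.den : ℤ) ∣ (D : ℤ) := hdivInt ▸ Rat.den_dvd a (D : ℤ)
  have hnum' : x.num.natAbs < 2 ^ m := by
    rcases eq_or_ne a 0 with rfl | h0
    · have : x = 0 := by simp [hx]
      simp [this]
    · exact lt_of_le_of_lt
        (Nat.le_of_dvd (Int.natAbs_pos.mpr h0) (Int.natAbs_dvd_natAbs.mpr hnum)) ha
  have hden' : x.den < 2 ^ m := by
    have : x.den ∣ D := by exact_mod_cast hden
    exact lt_of_le_of_lt (Nat.le_of_dvd hDpos this) hD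
  exact max_le (Nat.size_le.mpr hnum') (Nat.size_le.mpr hden')

/-- On any region of `f^[t]`, the iterate is given by a product of `t` homogeneous
`(d+1)×(d+1)` matrices taken among the `p` pieces of `f`, and the size of every
entry of such a product is at most `(d+1)² s(f) p t + (t-1)⌈log₂(d+1)⌉`. -/
theorem size_of_iterates (d p sz : ℕ) (M : Fin p → Matrix (Fin (d + 1)) (Fin (d + 1)) ℚ)
    (hM : ∀ k i j, qsize (M k i j) ≤ sz) (t : ℕ) (ht : 1 ≤ t) (σ : Fin t → Fin p) :
    ∀ i j, qsize ((((List.finRange t).map fun k => M (σ k)).prod) i j) ≤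
      (d + 1) ^ 2 * sz * p * t + (t - 1) * Nat.clog 2 (d + 1) := by
  intro i j
  set c : ℕ := (d+1)^2 * sz with hc
  set L : List (Matrix (Fin (d+1)) (Fin (d+1)) ℚ) :=
    (List.finRange t).map fun k => M (σ k) with hLdef
  have hlen : L.length = t := by simp [hLdef]
  have hne : L ≠ [] := by
    intro h
    have := congrArg List.length h
    rw [hlen] at this
    simp at this
    omega
  have hL : ∀ X ∈ L, ∃ (N : Matrix (Fin (d+1)) (Fin (d+1)) ℤ) (D : ℕ),
      0 < D ∧ D < 2 ^ c ∧ (∀ i j, (N i j).natAbs < 2 ^ c) ∧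
      (∀ i j, X i j = (N i j : ℚ) / (D : ℚ)) := by
    intro X hX
    rw [hLdef, List.mem_map] at hX
    obtain ⟨k, _, rfl⟩ := hX
    exact matrix_rep d sz _ (fun i j => hM (σ k) i j)
  obtain ⟨A, DT, hDTpos, hDTlt, hAlt, hrep⟩ := prod_rep d c L hne hL
  rw [hlen] at hDTlt hAlt
  set m : ℕ := c * t + (t - 1) * Nat.clog 2 (d + 1) with hm
  have hq : qsize (L.prod i j) ≤ m := by
    apply qsize_le_of_rep hDTpos ?_ ?_ (hrep i j)
    · calc (A i j).natAbs < (d+1) ^ (t - 1) * 2 ^ (c * t) := hAlt i j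
        _ ≤ (2 ^ Nat.clog 2 (d+1)) ^ (t - 1) * 2 ^ (c * t) := by
            gcongr
            exact Nat.le_pow_clog one_lt_two _
        _ = 2 ^ m := by rw [← pow_mul, ← pow_add, hm]; ring_nf
    · calc DT < 2 ^ (c * t) := hDTlt
        _ ≤ 2 ^ m := Nat.pow_le_pow_right (by norm_num) (by omega)
  refine le_trans hq ?_
  have hp : c * t ≤ (d + 1) ^ 2 * sz * p * t := by
    have hp1 : 0 < p := (σ ⟨0, ht⟩).pos
    rw [hc]
    exact Nat.mul_le_mul_right t (Nat.le_mul_of_pos_right _ hp1)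
  rw [hm]
  exact Nat.add_le_add_right hp _
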